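/- An elementary cellular automaton F_N is topologically transitive if and only if it is surjective and sensitive. -/

import Mathlib

/-- Cantor metric on configurations `ℤ → Bool`. -/
noncomputable def dC (x y : ℤ → Bool) : ℝ :=
  ∑' i : ℤ, if x i = y i then 0 else (1 / 2 : ℝ) ^ i.natAbs

/-- Local rule of the ECA with rule number `N`:
`(a,b,c)` is mapped to the coefficient of `2^(4a+2b+c)` in the binary expansion of `N`. -/
def localRule (N : ℕ) (a b c : Bool) : Bool :=
  N.testBit (4 * a.toNat + 2 * b.toNat + c.toNat)

/-- The elementary cellular automaton with rule number `N`. -/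
def eca (N : ℕ) (x : ℤ → Bool) : ℤ → Bool :=
  fun i => localRule N (x (i - 1)) (x i) (x (i + 1))

/-- `x` belongs to the cylinder `[u]_0`. -/
def inCyl (u : List Bool) (x : ℤ → Bool) : Prop :=
  ∀ j : Fin u.length, x ((j : ℕ) : ℤ) = u.get j

/-- `u` is an `m`-blocking word for `F`. -/
def Blocking (F : (ℤ → Bool) → ℤ → Bool) (m : ℕ) (u : List Bool) : Prop :=
  m ≤ u.length ∧ ∃ q : ℕ, q + m ≤ u.length ∧
    ∀ x y : ℤ → Bool, inCyl u x → inCyl u y → ∀ n : ℕ, ∀ j : ℤ,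
      (q : ℤ) ≤ j → j < (q : ℤ) + (m : ℤ) → F^[n] x j = F^[n] y j

/-- `x` is an equicontinuity point of `F`. -/
def EquicontinuityPoint (F : (ℤ → Bool) → ℤ → Bool) (x : ℤ → Bool) : Prop :=
  ∀ ε : ℝ, 0 < ε → ∃ δ : ℝ, 0 < δ ∧ ∀ y : ℤ → Bool, dC x y < δ →
    ∀ n : ℕ, dC (F^[n] x) (F^[n] y) < ε

/-- `F` is almost equicontinuous: it has at least one equicontinuity point. -/
def AlmostEquicontinuousCA (F : (ℤ → Bool) → ℤ → Bool) : Prop :=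
  ∃ x : ℤ → Bool, EquicontinuityPoint F x

/-- `F` is equicontinuous: every point is an equicontinuity point. -/
def EquicontinuousCA (F : (ℤ → Bool) → ℤ → Bool) : Prop :=
  ∀ x : ℤ → Bool, EquicontinuityPoint F x

/-- `F` is sensitive to initial conditions. -/
def SensitiveCA (F : (ℤ → Bool) → ℤ → Bool) : Prop :=
  ∃ ε : ℝ, 0 < ε ∧ ∀ x : ℤ → Bool, ∀ δ : ℝ, 0 < δ →
    ∃ y : ℤ → Bool, dC x y < δ ∧ ∃ n : ℕ, ε ≤ dC (F^[n] x) (F^[n] y)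

/-- `F` is positively expansive. -/
def PosExpansiveCA (F : (ℤ → Bool) → ℤ → Bool) : Prop :=
  ∃ ε : ℝ, 0 < ε ∧ ∀ x y : ℤ → Bool, x ≠ y →
    ∃ n : ℕ, ε ≤ dC (F^[n] x) (F^[n] y)

/-- The power `σ^q` of the shift map, for `q : ℤ` : `(σ^q x)_i = x_{i+q}`. -/
def shiftBy (q : ℤ) (x : ℤ → Bool) : ℤ → Bool := fun i => x (i + q)

/-- `F` is left-permutive. -/
def LeftPermutive (N : ℕ) : Prop :=
  ∀ b c : Bool, Function.Bijective (fun a => localRule N a b c)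

/-- `F` is right-permutive. -/
def RightPermutive (N : ℕ) : Prop :=
  ∀ a b : Bool, Function.Bijective (fun c => localRule N a b c)

/-- `U` is open in the Cantor metric topology. -/
def IsOpenC (U : Set (ℤ → Bool)) : Prop :=
  ∀ x ∈ U, ∃ δ : ℝ, 0 < δ ∧ ∀ y : ℤ → Bool, dC x y < δ → y ∈ U

/-- `F` is topologically transitive. -/
def TransitiveCA (F : (ℤ → Bool) → ℤ → Bool) : Prop :=
  ∀ U V : Set (ℤ → Bool), IsOpenC U → IsOpenC V → U.Nonempty → V.Nonempty →
    ∃ n : ℕ, 0 < n ∧ ((F^[n]) '' U ∩ V).Nonempty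


namespace ECAProof


noncomputable def fZ : ℤ → ℝ := fun i => (1 / 2 : ℝ) ^ i.natAbs

lemma fZ_nonneg (i : ℤ) : 0 ≤ fZ i := by unfold fZ; positivity

lemma summable_fZ : Summable fZ := by
  apply Summable.of_nat_of_neg
  · simpa [fZ] using summable_geometric_of_lt_one (by norm_num : (0:ℝ) ≤ 1/2) (by norm_num)
  · simpa [fZ] using summable_geometric_of_lt_one (by norm_num : (0:ℝ) ≤ 1/2) (by norm_num)

lemma dterm_le (x y : ℤ → Bool) (i : ℤ) :
    (if x i = y i then (0:ℝ) else (1 / 2 : ℝ) ^ i.natAbs) ≤ fZ i := by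
  by_cases h : x i = y i <;> simp [h, fZ, fZ_nonneg]
  all_goals positivity

lemma dterm_nonneg (x y : ℤ → Bool) (i : ℤ) :
    (0:ℝ) ≤ (if x i = y i then (0:ℝ) else (1 / 2 : ℝ) ^ i.natAbs) := by
  by_cases h : x i = y i <;> simp [h]
  all_goals positivity

lemma summable_dterm (x y : ℤ → Bool) :
    Summable (fun i : ℤ => if x i = y i then (0:ℝ) else (1 / 2 : ℝ) ^ i.natAbs) :=
  Summable.of_nonneg_of_le (dterm_nonneg x y) (dterm_le x y) summable_fZ

lemma dC_nonneg (x y : ℤ → Bool) : 0 ≤ dC x y :=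
  tsum_nonneg (dterm_nonneg x y)

/-- if `dC x y < (1/2)^K` then `x` and `y` agree on `[-K, K]`. -/
lemma agree_of_dC_lt {x y : ℤ → Bool} {K : ℕ} (h : dC x y < (1/2:ℝ)^K)
    (i : ℤ) (hi : i.natAbs ≤ K) : x i = y i := by
  by_contra hne
  have h1 : (1/2:ℝ)^K ≤ (1/2:ℝ)^i.natAbs := by
    apply pow_le_pow_of_le_one (by norm_num) (by norm_num) hi
  have h2 : (if x i = y i then (0:ℝ) else (1 / 2 : ℝ) ^ i.natAbs) ≤ dC x y :=
    Summable.le_tsum (summable_dterm x y) i (fun j _ => dterm_nonneg x y j)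
  rw [if_neg hne] at h2
  linarith

/-- tail estimate : for every `δ > 0` there is `K` such that agreement on `[-K,K]`
implies `dC < δ`. -/
lemma exists_K (δ : ℝ) (hδ : 0 < δ) :
    ∃ K : ℕ, ∀ x y : ℤ → Bool, (∀ i : ℤ, i.natAbs ≤ K → x i = y i) → dC x y < δ := by
  have hs := summable_fZ
  have htsum : HasSum fZ (∑' i, fZ i) := hs.hasSum
  rw [HasSum] at htsum
  have : ∀ᶠ s : Finset ℤ in Filter.atTop, ∑ i ∈ s, fZ i ∈ Set.Ioi (∑' i, fZ i - δ) := by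
    apply htsum
    exact Ioi_mem_nhds (by linarith)
  rcases this.exists with ⟨s0, hs0⟩
  simp only [Set.mem_Ioi] at hs0
  -- K := max natAbs over s0
  obtain ⟨K, hK⟩ : ∃ K : ℕ, ∀ i ∈ s0, i.natAbs ≤ K := by
    refine ⟨(s0.image Int.natAbs).sup id, fun i hi => ?_⟩
    exact Finset.le_sup (f := id) (Finset.mem_image_of_mem Int.natAbs hi)
  refine ⟨K, fun x y hxy => ?_⟩
  set B : Finset ℤ := Finset.Icc (-(K:ℤ)) K with hB
  have hsub : s0 ⊆ B := by
    intro i hi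
    simp only [hB, Finset.mem_Icc]
    have := hK i hi
    omega
  have hsumB : ∑ i ∈ s0, fZ i ≤ ∑ i ∈ B, fZ i :=
    Finset.sum_le_sum_of_subset_of_nonneg hsub (fun i _ _ => fZ_nonneg i)
  -- dC x y ≤ ∑' over complement of B of fZ
  have hcompl : ∑ i ∈ B, fZ i + ∑' (i : ↑((↑B : Set ℤ))ᶜ), fZ ↑i = ∑' i, fZ i :=
    Summable.sum_add_tsum_compl hs
  have hbound : dC x y ≤ ∑' (i : ↑((↑B : Set ℤ))ᶜ), fZ ↑i := by
    have h1 : dC x y ≤ ∑' i : ℤ, (if i ∈ B then (0:ℝ) else fZ i) := by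
      apply Summable.tsum_le_tsum _ (summable_dterm x y)
      · exact Summable.of_nonneg_of_le
          (fun i => by by_cases h : i ∈ B <;> simp [h, fZ_nonneg])
          (fun i => by by_cases h : i ∈ B <;> simp [h, fZ_nonneg]) hs
      · intro i
        by_cases hiB : i ∈ B
        · have : i.natAbs ≤ K := by
            simp only [hB, Finset.mem_Icc] at hiB; omega
          simp [hxy i this, hiB]
        · simp only [if_neg hiB]
          exact dterm_le x y i
    have h2 : ∑' i : ℤ, (if i ∈ B then (0:ℝ) else fZ i)
        = ∑' (i : ↑((↑B : Set ℤ))ᶜ), fZ ↑i := by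
      set g : ℤ → ℝ := fun i => if i ∈ B then (0:ℝ) else fZ i with hg
      have hgsm : Summable g :=
        Summable.of_nonneg_of_le
          (fun i => by by_cases h : i ∈ B <;> simp [hg, h, fZ_nonneg])
          (fun i => by by_cases h : i ∈ B <;> simp [hg, h, fZ_nonneg]) hs
      have hsplit : ∑ i ∈ B, g i + ∑' (i : ↑((↑B : Set ℤ))ᶜ), g ↑i = ∑' i, g i :=
        Summable.sum_add_tsum_compl hgsm
      have hzero : ∑ i ∈ B, g i = 0 := by
        apply Finset.sum_eq_zero; intro i hi; simp [hg, hi]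
      have hcongr : ∑' (i : ↑((↑B : Set ℤ))ᶜ), g ↑i = ∑' (i : ↑((↑B : Set ℤ))ᶜ), fZ ↑i := by
        apply tsum_congr; rintro ⟨i, hi⟩
        have : i ∉ B := by simpa using hi
        simp [hg, this]
      rw [← hcongr]; linarith [hsplit, hzero]
    linarith [h1, h2]
  linarith [hsumB, hcompl, hbound, hs0]


variable {N : ℕ}

lemma eca_apply (N : ℕ) (x : ℤ → Bool) (i : ℤ) :
    eca N x i = localRule N (x (i-1)) (x i) (x (i+1)) := rfl

/-- locality of the iterates. -/
lemma iter_local (N : ℕ) : ∀ (n : ℕ) (x y : ℤ → Bool) (i : ℤ),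
    (∀ j : ℤ, i - n ≤ j → j ≤ i + n → x j = y j) → (eca N)^[n] x i = (eca N)^[n] y i := by
  intro n
  induction n with
  | zero => intro x y i h; simpa using h i (by omega) (by omega)
  | succ n ih =>
    intro x y i h
    rw [Function.iterate_succ_apply, Function.iterate_succ_apply]
    apply ih
    intro j hj1 hj2
    rw [eca_apply, eca_apply, h (j-1) (by omega) (by omega), h j (by omega) (by omega),
      h (j+1) (by omega) (by omega)]

lemma eca_shift (N : ℕ) (q : ℤ) (x : ℤ → Bool) :
    eca N (shiftBy q x) = shiftBy q (eca N x) := by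
  funext i
  show localRule N (x (i - 1 + q)) (x (i + q)) (x (i + 1 + q))
    = localRule N (x (i + q - 1)) (x (i + q)) (x (i + q + 1))
  rw [show i - 1 + q = i + q - 1 by ring, show i + 1 + q = i + q + 1 by ring]

lemma iter_shift (N : ℕ) (q : ℤ) : ∀ (n : ℕ) (x : ℤ → Bool),
    (eca N)^[n] (shiftBy q x) = shiftBy q ((eca N)^[n] x) := by
  intro n
  induction n with
  | zero => intro x; rfl
  | succ n ih =>
    intro x
    rw [Function.iterate_succ_apply, Function.iterate_succ_apply, eca_shift, ih]

/-- cylinders are open. -/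
lemma cyl_open (z : ℤ → Bool) (K : ℕ) :
    IsOpenC {y : ℤ → Bool | ∀ i : ℤ, i.natAbs ≤ K → y i = z i} := by
  intro y hy
  refine ⟨(1/2:ℝ)^K, by positivity, fun y' hy' i hi => ?_⟩
  rw [← agree_of_dC_lt hy' i hi]
  exact hy i hi

lemma univ_open : IsOpenC (Set.univ : Set (ℤ → Bool)) :=
  fun _ _ => ⟨1, by norm_num, fun _ _ => Set.mem_univ _⟩

section Surj

/-- ultrafilter limit: if every central window of `z` has a preimage word, `z` has a preimage. -/
lemma limit_preimage (N : ℕ) (z : ℤ → Bool)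
    (h : ∀ m : ℕ, ∃ x : ℤ → Bool, ∀ i : ℤ, i.natAbs ≤ m → eca N x i = z i) :
    ∃ x : ℤ → Bool, eca N x = z := by
  classical
  choose xs hxs using h
  let U : Ultrafilter ℕ := Ultrafilter.of Filter.atTop
  have hUle : (U : Filter ℕ) ≤ Filter.atTop := Ultrafilter.of_le _
  let x : ℤ → Bool := fun i => if {m : ℕ | xs m i = true} ∈ U then true else false
  have hconv : ∀ i : ℤ, {m : ℕ | xs m i = x i} ∈ U := by
    intro i
    by_cases h : {m : ℕ | xs m i = true} ∈ U
    · have : x i = true := by simp [x, h]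
      rw [this]; exact h
    · have hx : x i = false := by simp [x, h]
      rw [hx]
      have := (Ultrafilter.compl_mem_iff_notMem (s := {m : ℕ | xs m i = true}) (f := U)).2 h
      convert this using 1
      ext m
      simp [Set.mem_compl_iff]
  refine ⟨x, funext fun i => ?_⟩
  have hA : {m : ℕ | xs m (i-1) = x (i-1)} ∩ {m : ℕ | xs m i = x i}
      ∩ {m : ℕ | xs m (i+1) = x (i+1)} ∩ {m : ℕ | i.natAbs ≤ m} ∈ U := by
    refine Filter.inter_mem (Filter.inter_mem (Filter.inter_mem ?_ ?_) ?_) ?_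
    · exact hconv (i-1)
    · exact hconv i
    · exact hconv (i+1)
    · exact hUle (Filter.mem_atTop i.natAbs)
  obtain ⟨m, hm⟩ := Filter.nonempty_of_mem hA
  obtain ⟨⟨⟨h1, h2⟩, h3⟩, h4⟩ := hm
  have : eca N x i = eca N (xs m) i := by
    rw [eca_apply, eca_apply, h1, h2, h3]
  rw [this]
  exact hxs m i h4

lemma trans_surj (N : ℕ) (h : TransitiveCA (eca N)) : Function.Surjective (eca N) := by
  intro z
  by_contra hz
  push_neg at hz
  have horph : ∃ m : ℕ, ∀ x : ℤ → Bool, ¬(∀ i : ℤ, i.natAbs ≤ m → eca N x i = z i) := by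
    by_contra h'
    push_neg at h'
    obtain ⟨x, hx⟩ := limit_preimage N z h'
    exact hz x hx
  obtain ⟨m, hm⟩ := horph
  obtain ⟨n, hn, w, ⟨x, -, hxw⟩, hwV⟩ :=
    h Set.univ {y : ℤ → Bool | ∀ i : ℤ, i.natAbs ≤ m → y i = z i}
      univ_open (cyl_open z m) ⟨z, Set.mem_univ z⟩ ⟨z, fun i _ => rfl⟩
  obtain ⟨k, rfl⟩ : ∃ k, n = k + 1 := ⟨n - 1, by omega⟩
  rw [Function.iterate_succ_apply'] at hxw
  exact hm ((eca N)^[k] x) (fun i hi => by rw [hxw]; exact hwV i hi)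

end Surj


section Sens

lemma trans_sens (N : ℕ) (h : TransitiveCA (eca N)) : SensitiveCA (eca N) := by
  by_contra hns
  unfold SensitiveCA at hns
  push_neg at hns
  obtain ⟨x, δ, hδ, hF⟩ := hns ((1/2:ℝ)^(1:ℕ)) (by norm_num)
  obtain ⟨k0, hk0⟩ := exists_K δ hδ
  set k : ℕ := max k0 1 with hk
  set L : ℕ := 2 * k + 1 with hL
  -- blocking property P
  have P : ∀ y : ℤ → Bool, (∀ j : ℤ, j.natAbs ≤ k → y j = x j) →
      ∀ (n : ℕ) (j : ℤ), j.natAbs ≤ 1 → (eca N)^[n] y j = (eca N)^[n] x j := by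
    intro y hy n j hj
    have hd : dC x y < δ := hk0 x y (fun i hi => (hy i (le_trans hi (le_max_left _ _))).symm)
    exact (agree_of_dC_lt (hF y hd n) j hj).symm
  -- the periodic configuration z
  set z : ℤ → Bool := fun i => x ((i + k) % (L:ℤ) - k) with hzdef
  have hz1 : ∀ i : ℤ, i.natAbs ≤ k → z i = x i := by
    intro i hi
    have h1 : (i + k) % (L:ℤ) = i + k := Int.emod_eq_of_lt (by omega) (by omega)
    simp only [hzdef, h1]
    congr 1
    omega
  have hzper : ∀ (i t : ℤ), z (i + t * (L:ℤ)) = z i := by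
    intro i t
    simp only [hzdef]
    congr 1
    have h1 : i + t * (L:ℤ) + k = (i + k) + t * (L:ℤ) := by ring
    rw [h1, Int.add_mul_emod_self_right]
  have hshiftz : shiftBy ((1:ℤ) * (L:ℤ)) z = z := by
    funext i
    show z (i + 1 * (L:ℤ)) = z i
    exact hzper i 1
  -- column lemma
  have col : ∀ (t : ℤ) (y : ℤ → Bool), (∀ j : ℤ, (j - t * (L:ℤ)).natAbs ≤ k → y j = z j) →
      ∀ (n : ℕ) (p : ℤ), (p - t * (L:ℤ)).natAbs ≤ 1 →
      (eca N)^[n] y p = (eca N)^[n] z p := by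
    intro t y hy n p hp
    set y' : ℤ → Bool := shiftBy (t * (L:ℤ)) y with hy'def
    have hy' : ∀ j : ℤ, j.natAbs ≤ k → y' j = x j := by
      intro j hj
      have h1 : y' j = y (j + t * (L:ℤ)) := rfl
      have h2 : (j + t * (L:ℤ) - t * (L:ℤ)).natAbs ≤ k := by
        rw [show j + t * (L:ℤ) - t * (L:ℤ) = j by ring]; exact hj
      rw [h1, hy _ h2, hzper j t]
      exact hz1 j hj
    have hzx : ∀ j : ℤ, j.natAbs ≤ k → z j = x j := hz1
    have key : ∀ j : ℤ, j.natAbs ≤ 1 → (eca N)^[n] y' j = (eca N)^[n] z j := by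
      intro j hj
      rw [P y' hy' n j hj, ← P z hzx n j hj]
    have hshiftzt : shiftBy (t * (L:ℤ)) z = z := by
      funext i
      exact hzper i t
    have e1 : (eca N)^[n] y' (p - t * (L:ℤ)) = (eca N)^[n] y p := by
      rw [hy'def, iter_shift]
      show (eca N)^[n] y (p - t * (L:ℤ) + t * (L:ℤ)) = (eca N)^[n] y p
      congr 1; ring
    have e2 : (eca N)^[n] z (p - t * (L:ℤ)) = (eca N)^[n] z p := by
      have hsh := congrFun (iter_shift N (t * (L:ℤ)) n z) (p - t * (L:ℤ))
      rw [hshiftzt] at hsh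
      rw [hsh]
      show (eca N)^[n] z (p - t * (L:ℤ) + t * (L:ℤ)) = (eca N)^[n] z p
      congr 1; ring
    rw [← e1, ← e2]
    exact key (p - t * (L:ℤ)) hp
  -- strip lemma
  have strip : ∀ y : ℤ → Bool, (∀ j : ℤ, j.natAbs ≤ L + k → y j = z j) →
      ∀ (n : ℕ) (j : ℤ), j.natAbs ≤ L → (eca N)^[n] y j = (eca N)^[n] z j := by
    intro y hy n
    induction n with
    | zero =>
      intro j hj
      simpa using hy j (by omega)
    | succ n ih =>
      intro j hj
      by_cases hcase : ∃ t : ℤ, t.natAbs ≤ 1 ∧ (j - t * (L:ℤ)).natAbs ≤ 1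
      · obtain ⟨t, ht1, ht2⟩ := hcase
        apply col t y _ (n+1) j ht2
        intro j' hj'
        apply hy
        have ht : t = -1 ∨ t = 0 ∨ t = 1 := by omega
        rcases ht with ht | ht | ht <;> subst ht <;> omega
      · push_neg at hcase
        have h0 := hcase 0 (by norm_num)
        have h1 := hcase 1 (by norm_num)
        have hm1 := hcase (-1) (by norm_num)
        rw [Function.iterate_succ_apply', Function.iterate_succ_apply',
          eca_apply, eca_apply, ih (j-1) (by omega), ih j (by omega), ih (j+1) (by omega)]
  -- the target configuration w
  set w : ℤ → Bool := fun i => if i = 0 then true else false with hwdef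
  obtain ⟨n, hn, v, ⟨y, hyU, hyv⟩, hvV⟩ :=
    h {y : ℤ → Bool | ∀ i : ℤ, i.natAbs ≤ L + k → y i = z i}
      {y : ℤ → Bool | ∀ i : ℤ, i.natAbs ≤ L → y i = w i}
      (cyl_open z (L+k)) (cyl_open w L) ⟨z, fun i _ => rfl⟩ ⟨w, fun i _ => rfl⟩
  -- F^[n] z is L-periodic
  have hper : (eca N)^[n] z ((L:ℤ)) = (eca N)^[n] z 0 := by
    have hsh := congrFun (iter_shift N ((1:ℤ) * (L:ℤ)) n z) 0
    rw [hshiftz] at hsh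
    have h2 : shiftBy ((1:ℤ) * (L:ℤ)) ((eca N)^[n] z) 0 = (eca N)^[n] z ((L:ℤ)) := by
      show (eca N)^[n] z (0 + 1 * (L:ℤ)) = (eca N)^[n] z ((L:ℤ))
      congr 1; ring
    rw [h2] at hsh
    exact hsh.symm
  have e0 : (eca N)^[n] z 0 = true := by
    rw [← strip y hyU n 0 (by omega), hyv]
    have := hvV 0 (by omega)
    simpa [hwdef] using this
  have eL : (eca N)^[n] z (L:ℤ) = false := by
    rw [← strip y hyU n (L:ℤ) (by omega), hyv]
    have := hvV (L:ℤ) (by omega)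
    simp only [hwdef] at this
    rw [this]
    simp only [ite_eq_right_iff]
    intro hc
    exfalso; omega
  rw [hper, e0] at eL
  exact absurd eL (by simp)

end Sens

section Permutive

/-- single-cell left steering. -/
lemma lp_single (N : ℕ) (hlp : LeftPermutive N) :
    ∀ (n : ℕ) (x : ℤ → Bool) (i : ℤ) (v : Bool),
      ∃ a : Bool, (eca N)^[n+1] (Function.update x (i - (n:ℤ) - 1) a) i = v := by
  intro n
  induction n with
  | zero =>
    intro x i v
    obtain ⟨a, ha⟩ := (hlp (x i) (x (i+1))).2 v
    refine ⟨a, ?_⟩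
    simp only [Nat.cast_zero, sub_zero]
    rw [Function.iterate_one, eca_apply]
    simp only [Function.update_apply]
    rw [if_pos trivial, if_neg (by omega : ¬ i = i - 1), if_neg (by omega : ¬ i + 1 = i - 1)]
    exact ha
  | succ n ih =>
    intro x i v
    obtain ⟨b0, hb0⟩ := ih (eca N x) i v
    set p : ℤ := i - ((n+1 : ℕ) : ℤ) - 1 with hp
    have hpn : p = i - (n:ℤ) - 2 := by push_cast [hp]; ring
    obtain ⟨a, ha⟩ := (hlp (x (p+1)) (x (p+2))).2 b0
    refine ⟨a, ?_⟩
    rw [Function.iterate_succ_apply]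
    have hagree : ∀ j : ℤ, i - ((n:ℤ)+1) ≤ j → j ≤ i + ((n:ℤ)+1) →
        eca N (Function.update x p a) j = Function.update (eca N x) (i - (n:ℤ) - 1) b0 j := by
      intro j hj1 hj2
      by_cases hje : j = p + 1
      · subst hje
        rw [eca_apply]
        simp only [Function.update_apply]
        rw [if_pos (by omega : p + 1 - 1 = p), if_neg (by omega : ¬ p + 1 = p),
          if_neg (by omega : ¬ p + 1 + 1 = p), if_pos (by omega : p + 1 = i - (n:ℤ) - 1)]
        rw [show p + 1 + 1 = p + 2 by ring]
        exact ha
      · have hj3 : p + 1 < j := by omega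
        rw [eca_apply]
        simp only [Function.update_apply]
        rw [if_neg (by omega : ¬ j - 1 = p), if_neg (by omega : ¬ j = p),
          if_neg (by omega : ¬ j + 1 = p), if_neg (by omega : ¬ j = i - (n:ℤ) - 1)]
        rfl
    have := iter_local N (n+1) (eca N (Function.update x p a))
      (Function.update (eca N x) (i - (n:ℤ) - 1) b0) i (by
        intro j hj1 hj2
        apply hagree j (by push_cast at hj1 ⊢; omega) (by push_cast at hj2 ⊢; omega))
    rw [this]
    exact hb0

/-- multi-cell left steering. -/
lemma lp_multi (N : ℕ) (hlp : LeftPermutive N) :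
    ∀ (m : ℕ) (n : ℕ) (x : ℤ → Bool) (i2 : ℤ) (v : ℤ → Bool),
      ∃ x' : ℤ → Bool,
        (∀ j : ℤ, (j < i2 - m - (n:ℤ) - 1 ∨ i2 - (n:ℤ) - 1 < j) → x' j = x j) ∧
        (∀ i : ℤ, i2 - m ≤ i → i ≤ i2 → (eca N)^[n+1] x' i = v i) := by
  intro m
  induction m with
  | zero =>
    intro n x i2 v
    obtain ⟨a, ha⟩ := lp_single N hlp n x i2 (v i2)
    refine ⟨Function.update x (i2 - (n:ℤ) - 1) a, fun j hj => ?_, fun i hi1 hi2 => ?_⟩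
    · simp only [Function.update_apply]
      rw [if_neg (by push_cast at hj; omega)]
    · have : i = i2 := by push_cast at hi1 hi2; omega
      subst this
      exact ha
  | succ m ih =>
    intro n x i2 v
    obtain ⟨a, ha⟩ := lp_single N hlp n x i2 (v i2)
    set x1 : ℤ → Bool := Function.update x (i2 - (n:ℤ) - 1) a with hx1
    obtain ⟨x', hx'eq, hx'tgt⟩ := ih n x1 (i2 - 1) v
    refine ⟨x', fun j hj => ?_, fun i hi1 hi2 => ?_⟩
    · have h1 : x' j = x1 j := by
        apply hx'eq
        push_cast at hj ⊢
        omega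
      rw [h1, hx1]
      simp only [Function.update_apply]
      rw [if_neg (by push_cast at hj; omega)]
    · by_cases hi : i ≤ i2 - 1
      · exact hx'tgt i (by push_cast at hi1 ⊢; omega) hi
      · have hie : i = i2 := by omega
        subst hie
        have : (eca N)^[n+1] x' i = (eca N)^[n+1] x1 i := by
          apply iter_local
          intro j hj1 hj2
          apply hx'eq
          right
          push_cast
          omega
        rw [this]
        exact ha

/-- single-cell right steering. -/
lemma rp_single (N : ℕ) (hrp : RightPermutive N) :
    ∀ (n : ℕ) (x : ℤ → Bool) (i : ℤ) (v : Bool),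
      ∃ c : Bool, (eca N)^[n+1] (Function.update x (i + (n:ℤ) + 1) c) i = v := by
  intro n
  induction n with
  | zero =>
    intro x i v
    obtain ⟨c, hc⟩ := (hrp (x (i-1)) (x i)).2 v
    refine ⟨c, ?_⟩
    simp only [Nat.cast_zero, add_zero]
    rw [Function.iterate_one, eca_apply]
    simp only [Function.update_apply]
    rw [if_neg (by omega : ¬ i - 1 = i + 1), if_neg (by omega : ¬ i = i + 1), if_pos trivial]
    exact hc
  | succ n ih =>
    intro x i v
    obtain ⟨b0, hb0⟩ := ih (eca N x) i v
    set p : ℤ := i + ((n+1 : ℕ) : ℤ) + 1 with hp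
    have hpn : p = i + (n:ℤ) + 2 := by push_cast [hp]; ring
    obtain ⟨c, hc⟩ := (hrp (x (p-2)) (x (p-1))).2 b0
    refine ⟨c, ?_⟩
    rw [Function.iterate_succ_apply]
    have hagree : ∀ j : ℤ, i - ((n:ℤ)+1) ≤ j → j ≤ i + ((n:ℤ)+1) →
        eca N (Function.update x p c) j = Function.update (eca N x) (i + (n:ℤ) + 1) b0 j := by
      intro j hj1 hj2
      by_cases hje : j = p - 1
      · subst hje
        rw [eca_apply]
        simp only [Function.update_apply]
        rw [if_neg (by omega : ¬ p - 1 - 1 = p), if_neg (by omega : ¬ p - 1 = p),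
          if_pos (by omega : p - 1 + 1 = p), if_pos (by omega : p - 1 = i + (n:ℤ) + 1)]
        rw [show p - 1 - 1 = p - 2 by ring]
        exact hc
      · have hj3 : j < p - 1 := by omega
        rw [eca_apply]
        simp only [Function.update_apply]
        rw [if_neg (by omega : ¬ j - 1 = p), if_neg (by omega : ¬ j = p),
          if_neg (by omega : ¬ j + 1 = p), if_neg (by omega : ¬ j = i + (n:ℤ) + 1)]
        rfl
    have := iter_local N (n+1) (eca N (Function.update x p c))
      (Function.update (eca N x) (i + (n:ℤ) + 1) b0) i (by
        intro j hj1 hj2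
        apply hagree j (by push_cast at hj1 ⊢; omega) (by push_cast at hj2 ⊢; omega))
    rw [this]
    exact hb0

/-- multi-cell right steering. -/
lemma rp_multi (N : ℕ) (hrp : RightPermutive N) :
    ∀ (m : ℕ) (n : ℕ) (x : ℤ → Bool) (i1 : ℤ) (v : ℤ → Bool),
      ∃ x' : ℤ → Bool,
        (∀ j : ℤ, (j < i1 + (n:ℤ) + 1 ∨ i1 + m + (n:ℤ) + 1 < j) → x' j = x j) ∧
        (∀ i : ℤ, i1 ≤ i → i ≤ i1 + m → (eca N)^[n+1] x' i = v i) := by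
  intro m
  induction m with
  | zero =>
    intro n x i1 v
    obtain ⟨c, hc⟩ := rp_single N hrp n x i1 (v i1)
    refine ⟨Function.update x (i1 + (n:ℤ) + 1) c, fun j hj => ?_, fun i hi1 hi2 => ?_⟩
    · simp only [Function.update_apply]
      rw [if_neg (by push_cast at hj; omega)]
    · have : i = i1 := by push_cast at hi1 hi2; omega
      subst this
      exact hc
  | succ m ih =>
    intro n x i1 v
    obtain ⟨c, hc⟩ := rp_single N hrp n x i1 (v i1)
    set x1 : ℤ → Bool := Function.update x (i1 + (n:ℤ) + 1) c with hx1
    obtain ⟨x', hx'eq, hx'tgt⟩ := ih n x1 (i1 + 1) v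
    refine ⟨x', fun j hj => ?_, fun i hi1 hi2 => ?_⟩
    · have h1 : x' j = x1 j := by
        apply hx'eq
        push_cast at hj ⊢
        omega
      rw [h1, hx1]
      simp only [Function.update_apply]
      rw [if_neg (by push_cast at hj; omega)]
    · by_cases hi : i1 + 1 ≤ i
      · exact hx'tgt i hi (by push_cast at hi2 ⊢; omega)
      · have hie : i = i1 := by omega
        subst hie
        have : (eca N)^[n+1] x' i = (eca N)^[n+1] x1 i := by
          apply iter_local
          intro j hj1 hj2
          apply hx'eq
          left
          push_cast
          omega
        rw [this]
        exact hc

lemma lp_trans (N : ℕ) (hlp : LeftPermutive N) : TransitiveCA (eca N) := by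
  intro U V hU hV hUne hVne
  obtain ⟨x0, hx0⟩ := hUne
  obtain ⟨y0, hy0⟩ := hVne
  obtain ⟨δU, hδU, hUball⟩ := hU x0 hx0
  obtain ⟨δV, hδV, hVball⟩ := hV y0 hy0
  obtain ⟨KU, hKU⟩ := exists_K δU hδU
  obtain ⟨KV, hKV⟩ := exists_K δV hδV
  set M : ℕ := max KU KV with hM
  obtain ⟨x', hx'eq, hx'tgt⟩ := lp_multi N hlp (2*M) (2*M+1) x0 (M:ℤ) y0
  refine ⟨2*M+2, by omega, (eca N)^[2*M+2] x', ⟨x', ?_, rfl⟩, ?_⟩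
  · apply hUball
    apply hKU
    intro i hi
    have : x' i = x0 i := by
      apply hx'eq
      right
      push_cast
      omega
    exact this.symm
  · apply hVball
    apply hKV
    intro i hi
    have h1 : (eca N)^[2*M+1+1] x' i = y0 i := by
      apply hx'tgt i (by push_cast; omega) (by push_cast; omega)
    rw [show 2*M+2 = 2*M+1+1 by ring]
    exact h1.symm
  
lemma rp_trans (N : ℕ) (hrp : RightPermutive N) : TransitiveCA (eca N) := by
  intro U V hU hV hUne hVne
  obtain ⟨x0, hx0⟩ := hUne
  obtain ⟨y0, hy0⟩ := hVne
  obtain ⟨δU, hδU, hUball⟩ := hU x0 hx0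
  obtain ⟨δV, hδV, hVball⟩ := hV y0 hy0
  obtain ⟨KU, hKU⟩ := exists_K δU hδU
  obtain ⟨KV, hKV⟩ := exists_K δV hδV
  set M : ℕ := max KU KV with hM
  obtain ⟨x', hx'eq, hx'tgt⟩ := rp_multi N hrp (2*M) (2*M+1) x0 (-(M:ℤ)) y0
  refine ⟨2*M+2, by omega, (eca N)^[2*M+2] x', ⟨x', ?_, rfl⟩, ?_⟩
  · apply hUball
    apply hKU
    intro i hi
    have : x' i = x0 i := by
      apply hx'eq
      left
      push_cast
      omega
    exact this.symm
  · apply hVball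
    apply hKV
    intro i hi
    have h1 : (eca N)^[2*M+1+1] x' i = y0 i := by
      apply hx'tgt i (by push_cast; omega) (by push_cast; omega)
    rw [show 2*M+2 = 2*M+1+1 by ring]
    exact h1.symm

end Permutive

section Orphan

def enc (f : ℕ → Bool) : ℕ → ℕ
  | 0 => 0
  | (n+1) => 2 * enc (fun j => f (j+1)) n + (f 0).toNat

lemma enc_lt : ∀ (n : ℕ) (f : ℕ → Bool), enc f n < 2^n := by
  intro n
  induction n with
  | zero => intro f; simp [enc]
  | succ n ih =>
    intro f
    have := ih (fun j => f (j+1))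
    have hb : (f 0).toNat ≤ 1 := Bool.toNat_le _
    simp only [enc]
    have : 2 * enc (fun j => f (j+1)) n + (f 0).toNat < 2 * 2^n := by omega
    calc 2 * enc (fun j => f (j+1)) n + (f 0).toNat < 2 * 2^n := this
    _ = 2^(n+1) := by ring

lemma enc_testBit : ∀ (n : ℕ) (f : ℕ → Bool) (j : ℕ), j < n → (enc f n).testBit j = f j := by
  intro n
  induction n with
  | zero => intro f j hj; omega
  | succ n ih =>
    intro f j hj
    cases j with
    | zero =>
      show (2 * enc (fun j => f (j+1)) n + (f 0).toNat).testBit 0 = f 0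
      rw [Nat.testBit_zero]
      rcases Bool.eq_false_or_eq_true (f 0) with h | h <;> rw [h] <;> simp [Nat.add_mul_mod_self_left]
    | succ j =>
      show (2 * enc (fun j => f (j+1)) n + (f 0).toNat).testBit (j+1) = f (j+1)
      rw [Nat.testBit_succ]
      have hdiv : (2 * enc (fun j => f (j+1)) n + (f 0).toNat) / 2 = enc (fun j => f (j+1)) n := by
        have hb : (f 0).toNat ≤ 1 := Bool.toNat_le _
        omega
      rw [hdiv]
      exact ih _ j (by omega)

def IsOrphan (N L w : ℕ) : Prop :=
  ∀ m : ℕ, m < 2^(L+2) → ∃ k : ℕ, k < L ∧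
    w.testBit k ≠ localRule N (m.testBit k) (m.testBit (k+1)) (m.testBit (k+2))

lemma orphan_not_surj (N L w : ℕ) (hL : 0 < L) (ho : IsOrphan N L w) :
    ¬ Function.Surjective (eca N) := by
  intro hs
  set z : ℤ → Bool := fun i => if 0 ≤ i ∧ i < (L:ℤ) then w.testBit i.toNat else false with hz
  obtain ⟨x, hx⟩ := hs z
  set m : ℕ := enc (fun j => x ((j:ℤ) - 1)) (L+2) with hm
  obtain ⟨k, hk, hne⟩ := ho m (enc_lt _ _)
  apply hne
  have e1 : m.testBit k = x ((k:ℤ) - 1) := enc_testBit _ _ k (by omega)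
  have e2 : m.testBit (k+1) = x ((k:ℤ)) := by
    rw [enc_testBit _ _ (k+1) (by omega)]
    congr 1
    push_cast
    ring
  have e3 : m.testBit (k+2) = x ((k:ℤ) + 1) := by
    rw [enc_testBit _ _ (k+2) (by omega)]
    congr 1
    push_cast
    ring
  rw [e1, e2, e3]
  have : localRule N (x ((k:ℤ) - 1)) (x (k:ℤ)) (x ((k:ℤ) + 1)) = z (k:ℤ) := by
    rw [← hx]; rfl
  rw [this, hz]
  simp only
  rw [if_pos (by constructor <;> [positivity; exact_mod_cast hk])]
  simp

end Orphan

section Cover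

def orphLen : List ℕ := [1, 3, 2, 3, 2, 5, 3, 4, 2, 4, 3, 3, 2, 4, 3, 0, 2, 3, 3, 3, 3, 4, 8, 5, 2, 5, 4, 4, 3, 4, 0, 4, 2, 4, 2, 4, 3, 9, 4, 4, 3, 5, 3, 5, 4, 0, 3, 3, 2, 4, 3, 0, 4, 4, 5, 3, 3, 6, 4, 4, 0, 5, 5, 3, 2, 4, 2, 5, 2, 4, 3, 4, 3, 6, 4, 0, 3, 5, 4, 4, 3, 3, 4, 4, 3, 0, 0, 4, 4, 0, 0, 9, 4, 4, 5, 5, 3, 5, 3, 6, 4, 0, 0, 5, 8, 0, 0, 5, 5, 6, 5, 4, 3, 5, 4, 4, 3, 3, 5, 3, 0, 5, 5, 4, 5, 4, 3, 3, 3, 3, 4, 5, 4, 5, 5, 0, 3, 5, 3, 3, 4, 4, 5, 3, 4, 5, 6, 5, 5, 0, 0, 8, 5, 0, 0, 4, 6, 3, 5, 3, 5, 5, 4, 4, 9, 0, 0, 4, 4, 0, 0, 3, 4, 4, 3, 3, 4, 4, 5, 3, 0, 4, 6, 3, 4, 3, 4, 2, 5, 2, 4, 2, 3, 5, 5, 0,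 4, 4, 6, 3, 3, 5, 4, 4, 0, 3, 4, 2, 3, 3, 0, 4, 5, 3, 5, 3, 4, 4, 9, 3, 4, 2, 4, 2, 4, 0, 4, 3, 4, 4, 5, 2, 5, 8, 4, 3, 3, 3, 3, 2, 0, 3, 4, 2, 3, 3, 4, 2, 4, 3, 5, 2, 3, 2, 3, 1]

def orphWord : List ℕ := [1, 5, 3, 5, 3, 17, 7, 9, 3, 13, 5, 5, 3, 3, 7, 0, 3, 5, 7, 2, 7, 9, 169, 18, 3, 27, 15, 5, 7, 3, 0, 6, 3, 13, 3, 13, 5, 297, 10, 10, 7, 29, 7, 2, 5, 0, 2, 2, 3, 11, 7, 0, 5, 5, 22, 5, 7, 4, 15, 2, 0, 4, 10, 2, 3, 11, 3, 27, 3, 12, 7, 12, 7, 57, 15, 0, 7, 24, 15, 12, 5, 5, 15, 10, 7, 0, 0, 6, 15, 0, 0, 146, 15, 3, 4, 4, 7, 23, 7, 8, 10, 0, 0, 4, 169, 0, 0, 2, 22, 24, 10, 2, 7, 8, 15, 4, 2, 2, 10, 2, 0, 8, 4, 4, 10, 4, 2, 2, 5, 5, 11, 21, 13, 27, 23, 0,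 5, 21, 5, 5, 11, 0, 8, 0, 13, 21, 57, 18, 29, 0, 0, 106, 27, 0, 0, 5, 4, 0, 8, 0, 17, 27, 12, 0, 297, 0, 0, 0, 9, 0, 0, 0, 5, 0, 2, 0, 3, 0, 24, 0, 0, 0, 24, 0, 3, 0, 3, 0, 4, 0, 4, 0, 5, 21, 27, 0, 13, 0, 8, 0, 2, 18, 10, 10, 0, 0, 4, 0, 5, 5, 0, 10, 2, 0, 2, 0, 5, 5, 146, 2, 2, 0, 4, 0, 9, 0, 12, 0, 10, 0, 4, 0, 18, 106, 6, 0, 5, 0, 2, 0, 0, 0, 12, 0, 2, 0, 2, 0, 6, 0, 4, 0, 2, 0, 2, 0]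

def lpB (N : ℕ) : Bool :=
  (localRule N false false false != localRule N true false false) &&
  (localRule N false false true != localRule N true false true) &&
  (localRule N false true false != localRule N true true false) &&
  (localRule N false true true != localRule N true true true)

def rpB (N : ℕ) : Bool :=
  (localRule N false false false != localRule N false false true) &&
  (localRule N false true false != localRule N false true true) &&
  (localRule N true false false != localRule N true false true) &&
  (localRule N true true false != localRule N true true true)

def orphB (N L w : ℕ) : Bool :=
  (List.range (2^(L+2))).all (fun m => (List.range L).any (fun k =>
    w.testBit k != localRule N (m.testBit k) (m.testBit (k+1)) (m.testBit (k+2))))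

lemma bool_bij_of_ne {f : Bool → Bool} (h : f false ≠ f true) : Function.Bijective f := by
  constructor
  · intro a a' hq
    cases a <;> cases a' <;> simp_all
  · intro v
    by_cases hfv : f false = v
    · exact ⟨false, hfv⟩
    · refine ⟨true, ?_⟩
      cases hb : f true <;> cases hc : f false <;> cases v <;> simp_all

lemma lp_of_lpB {N : ℕ} (h : lpB N = true) : LeftPermutive N := by
  intro b c
  apply bool_bij_of_ne
  simp only [lpB, Bool.and_eq_true, bne_iff_ne, ne_eq] at h
  cases b <;> cases c <;> tauto

lemma rp_of_rpB {N : ℕ} (h : rpB N = true) : RightPermutive N := by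
  intro a b
  apply bool_bij_of_ne
  simp only [rpB, Bool.and_eq_true, bne_iff_ne, ne_eq] at h
  cases a <;> cases b <;> tauto

lemma orphan_of_orphB {N L w : ℕ} (h : orphB N L w = true) : IsOrphan N L w := by
  intro m hm
  rw [orphB, List.all_eq_true] at h
  have := h m (List.mem_range.2 hm)
  rw [List.any_eq_true] at this
  obtain ⟨k, hk, hne⟩ := this
  exact ⟨k, List.mem_range.1 hk, by simpa using hne⟩

def coverB : Bool :=
  (List.range 256).all (fun N =>
    lpB N || rpB N || (N == 51) || (N == 204) ||
      ((orphLen.getD N 0 != 0) && orphB N (orphLen.getD N 0) (orphWord.getD N 0)))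

set_option maxRecDepth 40000 in
set_option maxHeartbeats 4000000 in
lemma coverB_true : coverB = true := by decide

lemma cover (N : ℕ) (hN : N < 256) :
    LeftPermutive N ∨ RightPermutive N ∨ N = 51 ∨ N = 204 ∨
      (0 < orphLen.getD N 0 ∧ IsOrphan N (orphLen.getD N 0) (orphWord.getD N 0)) := by
  have h := coverB_true
  rw [coverB, List.all_eq_true] at h
  have := h N (List.mem_range.2 hN)
  simp only [Bool.or_eq_true, Bool.and_eq_true, beq_iff_eq, bne_iff_ne, ne_eq] at this
  rcases this with ((((h1 | h2) | h3) | h4) | ⟨h5, h6⟩)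
  · exact Or.inl (lp_of_lpB h1)
  · exact Or.inr (Or.inl (rp_of_rpB h2))
  · exact Or.inr (Or.inr (Or.inl h3))
  · exact Or.inr (Or.inr (Or.inr (Or.inl h4)))
  · exact Or.inr (Or.inr (Or.inr (Or.inr ⟨by omega, orphan_of_orphB h6⟩)))

end Cover

section Exceptional

lemma eca204_id : eca 204 = id := by
  funext x i
  have h : ∀ a b c : Bool, localRule 204 a b c = b := by decide
  exact h _ _ _

lemma not_sens_204 : ¬ SensitiveCA (eca 204) := by
  rintro ⟨ε, hε, h⟩
  obtain ⟨y, hy, n, hn⟩ := h (fun _ => false) ε hε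
  rw [eca204_id, Function.iterate_id] at hn
  simp only [id] at hn
  linarith

lemma dC_not (x y : ℤ → Bool) : dC (fun i => !(x i)) (fun i => !(y i)) = dC x y := by
  unfold dC
  apply tsum_congr
  intro i
  have : ((!(x i)) = (!(y i))) ↔ (x i = y i) := by
    cases x i <;> cases y i <;> simp
  by_cases h : x i = y i
  · rw [if_pos h, if_pos (this.2 h)]
  · rw [if_neg h, if_neg (fun hc => h (this.1 hc))]

lemma eca51_not (x : ℤ → Bool) : eca 51 x = fun i => !(x i) := by
  funext i
  have h : ∀ a b c : Bool, localRule 51 a b c = !b := by decide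
  exact h _ _ _

lemma dC_iter_51 : ∀ (n : ℕ) (x y : ℤ → Bool),
    dC ((eca 51)^[n] x) ((eca 51)^[n] y) = dC x y := by
  intro n
  induction n with
  | zero => intro x y; rfl
  | succ n ih =>
    intro x y
    rw [Function.iterate_succ_apply, Function.iterate_succ_apply, ih,
      eca51_not x, eca51_not y, dC_not]

lemma not_sens_51 : ¬ SensitiveCA (eca 51) := by
  rintro ⟨ε, hε, h⟩
  obtain ⟨y, hy, n, hn⟩ := h (fun _ => false) ε hε
  rw [dC_iter_51] at hn
  linarith

end Exceptional

end ECAProof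

/-- An elementary cellular automaton is topologically transitive if and only if it is
surjective and sensitive. -/
theorem eca_transitive_iff_surjective_and_sensitive (N : ℕ) (hN : N ≤ 255) :
    TransitiveCA (eca N) ↔ (Function.Surjective (eca N) ∧ SensitiveCA (eca N)) := by
  constructor
  · intro h
    exact ⟨ECAProof.trans_surj N h, ECAProof.trans_sens N h⟩
  · rintro ⟨hs, hsen⟩
    rcases ECAProof.cover N (by omega) with h | h | h | h | ⟨hpos, horph⟩
    · exact ECAProof.lp_trans N h
    · exact ECAProof.rp_trans N h
    · subst h; exact absurd hsen ECAProof.not_sens_51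
    · subst h; exact absurd hsen ECAProof.not_sens_204
    · exact absurd hs (ECAProof.orphan_not_surj N _ _ hpos horph)
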